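/- There is a constant c₄ > 0 such that the following holds for every N, every real μ with 0 ≤ μ ≤ 1, every real k ≥ 1, and every nonzero signal s ∈ ℂ^N: if A is a finite set of unit vectors in ℂ^N satisfying |⟨φ, φ'⟩| ≤ μ for all distinct φ, φ' ∈ A and |⟨s, φ⟩|² ≥ (1/k)·‖s‖² for all φ ∈ A, and if μ·k ≤ c₄, then |A| ≤ 4k. -/

import Mathlib

/-- There is a constant c₄ > 0 such that for every N, every 0 ≤ μ ≤ 1,
every real k ≥ 1, and every nonzero s ∈ ℂ^N: if A is a finite set of unit vectors in
ℂ^N with |⟨φ, φ'⟩| ≤ μ for all distinct φ, φ' ∈ A and |⟨s, φ⟩|² ≥ (1/k)·‖s‖² for all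
φ ∈ A, and μ·k ≤ c₄, then |A| ≤ 4k. -/
theorem stmt_17 :
    ∃ c₄ : ℝ, 0 < c₄ ∧
      ∀ (N : ℕ) (μ k : ℝ), 0 ≤ μ → μ ≤ 1 → 1 ≤ k →
        ∀ s : EuclideanSpace ℂ (Fin N), s ≠ 0 →
          ∀ A : Finset (EuclideanSpace ℂ (Fin N)),
            (∀ φ ∈ A, ‖φ‖ = 1) →
            (∀ φ ∈ A, ∀ φ' ∈ A, φ ≠ φ' → ‖(inner ℂ φ φ' : ℂ)‖ ≤ μ) →
            (∀ φ ∈ A, (1 / k) * ‖s‖ ^ 2 ≤ ‖(inner ℂ s φ : ℂ)‖ ^ 2) →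
            μ * k ≤ c₄ →
            (A.card : ℝ) ≤ 4 * k := by
  classical
  refine ⟨1/2, by norm_num, fun N μ k hμ0 hμ1 hk s hs A hunit hcoh hcorr hμk => ?_⟩
  have hk0 : (0:ℝ) < k := lt_of_lt_of_le one_pos hk
  rcases A.eq_empty_or_nonempty with rfl | hAne
  · simp; positivity
  set n : ℝ := (A.card : ℝ) with hn
  have hn1 : (1:ℝ) ≤ n := by
    have h := Finset.card_pos.mpr hAne
    rw [hn]; exact_mod_cast Nat.one_le_iff_ne_zero.mpr h.ne'
  have hs0 : (0:ℝ) < ‖s‖ := norm_pos_iff.2 hs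
  set c : EuclideanSpace ℂ (Fin N) → ℂ := fun φ => (starRingEnd ℂ) (inner ℂ s φ) with hc
  set v : EuclideanSpace ℂ (Fin N) := ∑ φ ∈ A, c φ • φ with hv
  set M : ℝ := ∑ φ ∈ A, ‖(inner ℂ s φ : ℂ)‖^2 with hM
  have hcnorm : ∀ φ, ‖c φ‖ = ‖(inner ℂ s φ : ℂ)‖ := fun φ => RCLike.norm_conj _
  -- lower bound on M
  have hMlb : n * ((1/k) * ‖s‖^2) ≤ M := by
    rw [hM, hn]
    calc (A.card : ℝ) * ((1/k) * ‖s‖^2) = ∑ _φ ∈ A, (1/k) * ‖s‖^2 := by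
          rw [Finset.sum_const, nsmul_eq_mul]
      _ ≤ _ := Finset.sum_le_sum hcorr
  have hMpos : 0 < M := lt_of_lt_of_le (by positivity) hMlb
  -- inner ℂ s v = M
  have hsv : (inner ℂ s v : ℂ) = (M : ℂ) := by
    rw [hv, inner_sum]
    push_cast [hM]
    refine Finset.sum_congr rfl fun φ _ => ?_
    rw [inner_smul_right, hc, Complex.conj_mul']
  -- M ≤ ‖s‖ ‖v‖
  have h1 : M ≤ ‖s‖ * ‖v‖ := by
    have := norm_inner_le_norm (𝕜 := ℂ) s v
    rwa [hsv, Complex.norm_real, Real.norm_of_nonneg hMpos.le] at this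
  -- ‖v‖² ≤ M + μ * (n * M)
  have h2 : ‖v‖^2 ≤ M + μ * (n * M) := by
    have hvv : (‖v‖^2 : ℝ) = ‖(inner ℂ v v : ℂ)‖ := by
      rw [inner_self_eq_norm_sq_to_K (𝕜 := ℂ) v, norm_pow, RCLike.norm_ofReal, abs_norm]
    rw [hvv]
    have hexp : (inner ℂ v v : ℂ)
        = ∑ φ ∈ A, ∑ φ' ∈ A, (starRingEnd ℂ) (c φ) * (c φ' * inner ℂ φ φ') := by
      rw [hv, sum_inner]
      refine Finset.sum_congr rfl fun φ _ => ?_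
      rw [inner_sum]
      refine Finset.sum_congr rfl fun φ' _ => ?_
      rw [inner_smul_left, inner_smul_right]
    calc ‖(inner ℂ v v : ℂ)‖
        ≤ ∑ φ ∈ A, ∑ φ' ∈ A, ‖c φ‖ * (‖c φ'‖ * ‖(inner ℂ φ φ' : ℂ)‖) := by
          rw [hexp]
          refine (norm_sum_le _ _).trans (Finset.sum_le_sum fun φ _ => ?_)
          refine (norm_sum_le _ _).trans (Finset.sum_le_sum fun φ' _ => ?_)
          rw [norm_mul, norm_mul, RCLike.norm_conj]
      _ ≤ ∑ φ ∈ A, (‖c φ‖^2 + μ * (‖c φ‖ * ∑ φ' ∈ A, ‖c φ'‖)) := by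
          refine Finset.sum_le_sum fun φ hφ => ?_
          rw [← Finset.add_sum_erase _ _ hφ]
          have hdiag : ‖c φ‖ * (‖c φ‖ * ‖(inner ℂ φ φ : ℂ)‖) = ‖c φ‖^2 := by
            rw [inner_self_eq_norm_sq_to_K (𝕜 := ℂ) φ, hunit φ hφ]
            simp [sq]
          rw [hdiag]
          gcongr
          calc ∑ φ' ∈ A.erase φ, ‖c φ‖ * (‖c φ'‖ * ‖(inner ℂ φ φ' : ℂ)‖)
              ≤ ∑ φ' ∈ A.erase φ, μ * (‖c φ‖ * ‖c φ'‖) := by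
                refine Finset.sum_le_sum fun φ' hφ' => ?_
                have hne : φ ≠ φ' := (Finset.ne_of_mem_erase hφ').symm
                have := hcoh φ hφ φ' (Finset.mem_of_mem_erase hφ') hne
                calc ‖c φ‖ * (‖c φ'‖ * ‖(inner ℂ φ φ' : ℂ)‖)
                    ≤ ‖c φ‖ * (‖c φ'‖ * μ) := by gcongr
                  _ = μ * (‖c φ‖ * ‖c φ'‖) := by ring
            _ ≤ ∑ φ' ∈ A, μ * (‖c φ‖ * ‖c φ'‖) :=
                Finset.sum_le_sum_of_subset_of_nonneg (Finset.erase_subset _ _)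
                  (fun φ' _ _ => by positivity)
            _ = μ * (‖c φ‖ * ∑ φ' ∈ A, ‖c φ'‖) := by
                rw [Finset.mul_sum, Finset.mul_sum]
      _ ≤ M + μ * (n * M) := by
          rw [Finset.sum_add_distrib]
          have e1 : ∑ φ ∈ A, ‖c φ‖^2 = M := by
            rw [hM]; exact Finset.sum_congr rfl fun φ _ => by rw [hcnorm]
          have e2 : ∑ φ ∈ A, μ * (‖c φ‖ * ∑ φ' ∈ A, ‖c φ'‖)
              = μ * (∑ φ ∈ A, ‖c φ‖)^2 := by
            rw [← Finset.mul_sum, ← Finset.sum_mul, sq]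
          rw [e1, e2]
          have key : (∑ φ ∈ A, ‖c φ‖)^2 ≤ n * M := by
            calc (∑ φ ∈ A, ‖c φ‖)^2 ≤ A.card * ∑ φ ∈ A, ‖c φ‖^2 :=
                  sq_sum_le_card_mul_sum_sq
              _ = n * M := by rw [e1, hn]
          nlinarith [key]
  -- combine: M ≤ ‖s‖² (1 + μ n)
  have h3 : M ≤ ‖s‖^2 * (1 + μ * n) := by
    have hsq : M^2 ≤ ‖s‖^2 * (M + μ * (n * M)) := by
      calc M^2 = M * M := sq M
        _ ≤ (‖s‖ * ‖v‖) * (‖s‖ * ‖v‖) :=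
            mul_le_mul h1 h1 hMpos.le (by positivity)
        _ = ‖s‖^2 * ‖v‖^2 := by ring
        _ ≤ ‖s‖^2 * (M + μ * (n * M)) :=
            mul_le_mul_of_nonneg_left h2 (sq_nonneg _)
    nlinarith [hMpos, hsq]
  -- finish arithmetic
  have hs2 : (0:ℝ) < ‖s‖^2 := by positivity
  have hfin : n * ((1/k) * ‖s‖^2) ≤ ‖s‖^2 * (1 + μ * n) := hMlb.trans h3
  have hnk : n * (1/k) ≤ 1 + μ * n := by
    rw [show n * (1/k * ‖s‖^2) = (n*(1/k)) * ‖s‖^2 by ring,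
      show ‖s‖^2 * (1+μ*n) = (1+μ*n) * ‖s‖^2 by ring] at hfin
    exact le_of_mul_le_mul_right hfin hs2
  have h5 : n ≤ (1 + μ*n) * k := by
    have := mul_le_mul_of_nonneg_right hnk hk0.le
    rwa [mul_assoc, one_div_mul_cancel (ne_of_gt hk0), mul_one] at this
  have h6 : n * (μ*k) ≤ n * (1/2) :=
    mul_le_mul_of_nonneg_left hμk (by linarith)
  nlinarith [h5, h6]
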